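/- Let g > 0, H₀ > 0, E∞ > 0, v♯∞ > 0, and let h_crit > H₀ and c̄ > 0 satisfy c̄² = g·h_crit + h_crit·(h_crit + 2H₀)·E∞/H₀³ and c̄·H₀² = v♯∞·h_crit². Then there exists a unique C¹ function h : [0, ∞) → ℝ with h(0) = h_crit satisfying for all x ≥ 0 the first-order ODE h'(x) = −( (3·E∞/(c̄·H₀³·v♯∞)) · (h(x) − H₀)² · (h(x) + ((v♯∞)²/E∞)·(h_crit³/H₀)) / (h(x) + h_crit) )^{1/2}; moreover H₀ < h(x) ≤ h_crit for all x ≥ 0, h is strictly decreasing, and h(x) → H₀ as x → +∞. The even extension of h to ℝ is the profile of the peaked solitary wave of critical maximal amplitude h_crit and speed c̄. -/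

import Mathlib

open Filter Set

namespace PW17

variable {H₀ K A B : ℝ}

noncomputable def Fv (H₀ K A B y : ℝ) : ℝ :=
  Real.sqrt (K * (y - H₀) ^ 2 * (y + A) / (y + B))

noncomputable def phi (H₀ K A B y : ℝ) : ℝ := (Fv H₀ K A B y)⁻¹

noncomputable def Xi (H₀ K A B y : ℝ) : ℝ := ∫ t in y..B, phi H₀ K A B t

lemma Fv_pos (hH : 0 < H₀) (hK : 0 < K) (hA : 0 < A) (hB : H₀ < B) {y : ℝ}
    (hy : H₀ < y) : 0 < Fv H₀ K A B y := by
  apply Real.sqrt_pos.2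
  apply div_pos
  · apply mul_pos (mul_pos hK (pow_pos (sub_pos.2 hy) 2)); linarith
  · linarith

lemma Fv_contOn (hH : 0 < H₀) (hB : H₀ < B) :
    ContinuousOn (Fv H₀ K A B) (Ioi H₀) := by
  apply ContinuousOn.sqrt
  apply ContinuousOn.div (by fun_prop) (by fun_prop)
  intro y hy
  have : H₀ < y := hy
  intro h
  have hBpos : 0 < B := lt_trans hH hB
  nlinarith

lemma phi_pos (hH : 0 < H₀) (hK : 0 < K) (hA : 0 < A) (hB : H₀ < B) {y : ℝ}
    (hy : H₀ < y) : 0 < phi H₀ K A B y :=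
  inv_pos.2 (Fv_pos hH hK hA hB hy)

lemma phi_contOn (hH : 0 < H₀) (hK : 0 < K) (hA : 0 < A) (hB : H₀ < B) :
    ContinuousOn (phi H₀ K A B) (Ioi H₀) :=
  (Fv_contOn hH hB).inv₀ fun y hy => (Fv_pos hH hK hA hB hy).ne'

lemma phi_intble (hH : 0 < H₀) (hK : 0 < K) (hA : 0 < A) (hB : H₀ < B) {a b : ℝ}
    (ha : H₀ < a) (hb : H₀ < b) :
    IntervalIntegrable (phi H₀ K A B) MeasureTheory.volume a b :=
  ((phi_contOn hH hK hA hB).mono (Set.ordConnected_Ioi.uIcc_subset ha hb)).intervalIntegrable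

lemma X_hasDerivAt (hH : 0 < H₀) (hK : 0 < K) (hA : 0 < A) (hB : H₀ < B) {y : ℝ}
    (hy : H₀ < y) : HasDerivAt (Xi H₀ K A B) (-(phi H₀ K A B y)) y := by
  exact intervalIntegral.integral_hasDerivAt_left
    (phi_intble hH hK hA hB hy hB)
    ((phi_contOn hH hK hA hB).stronglyMeasurableAtFilter isOpen_Ioi _ hy)
    (((phi_contOn hH hK hA hB)).continuousAt (isOpen_Ioi.mem_nhds hy))

lemma X_B : Xi H₀ K A B B = 0 := intervalIntegral.integral_same

lemma X_anti (hH : 0 < H₀) (hK : 0 < K) (hA : 0 < A) (hB : H₀ < B) :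
    StrictAntiOn (Xi H₀ K A B) (Ioi H₀) := by
  apply strictAntiOn_of_deriv_neg (convex_Ioi H₀)
  · intro y hy
    exact (X_hasDerivAt hH hK hA hB hy).continuousAt.continuousWithinAt
  · intro y hy
    rw [interior_Ioi] at hy
    rw [(X_hasDerivAt hH hK hA hB hy).deriv]
    simpa using phi_pos hH hK hA hB hy


-- bound: Fv t ≤ M * (t - H₀) on (H₀, B]
lemma Fv_le_low (hH : 0 < H₀) (hK : 0 < K) (hA : 0 < A) (hB : H₀ < B) {t : ℝ}
    (h1 : H₀ < t) (h2 : t ≤ B) :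
    Fv H₀ K A B t ≤ Real.sqrt (K * (B + A) / (H₀ + B)) * (t - H₀) := by
  have hBpos : 0 < B := lt_trans hH hB
  have hM : (0:ℝ) ≤ K * (B + A) / (H₀ + B) :=
    le_of_lt (div_pos (mul_pos hK (by linarith)) (by linarith))
  have key : K * (t - H₀) ^ 2 * (t + A) / (t + B)
      ≤ (Real.sqrt (K * (B + A) / (H₀ + B)) * (t - H₀)) ^ 2 := by
    rw [mul_pow, Real.sq_sqrt hM]
    have h3 : (t + A) / (t + B) ≤ (B + A) / (H₀ + B) :=
      div_le_div₀ (by linarith) (by linarith) (by linarith) (by linarith)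
    have h4 : K * (t - H₀) ^ 2 * (t + A) / (t + B)
        = (K * (t - H₀) ^ 2) * ((t + A) / (t + B)) := by ring
    have h5 : K * (B + A) / (H₀ + B) * (t - H₀) ^ 2
        = (K * (t - H₀) ^ 2) * ((B + A) / (H₀ + B)) := by ring
    rw [h4, h5]
    exact mul_le_mul_of_nonneg_left h3 (by positivity)
  calc Fv H₀ K A B t ≤ Real.sqrt ((Real.sqrt (K * (B + A) / (H₀ + B)) * (t - H₀)) ^ 2) :=
        Real.sqrt_le_sqrt key
    _ = Real.sqrt (K * (B + A) / (H₀ + B)) * (t - H₀) :=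
        Real.sqrt_sq (mul_nonneg (Real.sqrt_nonneg _) (by linarith))

lemma X_low (hH : 0 < H₀) (hK : 0 < K) (hA : 0 < A) (hB : H₀ < B) {y : ℝ}
    (h1 : H₀ < y) (h2 : y ≤ B) :
    (Real.sqrt (K * (B + A) / (H₀ + B)))⁻¹ * (Real.log (B - H₀) - Real.log (y - H₀))
      ≤ Xi H₀ K A B y := by
  have hBpos : 0 < B := lt_trans hH hB
  set M := Real.sqrt (K * (B + A) / (H₀ + B)) with hMdef
  have hMpos : 0 < M := Real.sqrt_pos.2 (div_pos (mul_pos hK (by linarith)) (by linarith))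
  have hle : ∀ t ∈ Icc y B, M⁻¹ * (t - H₀)⁻¹ ≤ phi H₀ K A B t := by
    intro t ht
    have h1t : H₀ < t := lt_of_lt_of_le h1 ht.1
    have hFpos := Fv_pos hH hK hA hB h1t
    have hFle := Fv_le_low hH hK hA hB h1t ht.2
    have := inv_anti₀ hFpos hFle
    calc M⁻¹ * (t - H₀)⁻¹ = (M * (t - H₀))⁻¹ := (mul_inv _ _).symm
      _ ≤ (Fv H₀ K A B t)⁻¹ := this
  have hint1 : IntervalIntegrable (fun t => M⁻¹ * (t - H₀)⁻¹) MeasureTheory.volume y B := by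
    apply ContinuousOn.intervalIntegrable
    apply ContinuousOn.mono (s := Ioi H₀)
    · exact (continuousOn_const.mul (((continuousOn_id.sub continuousOn_const)).inv₀
        (fun t ht => by have : H₀ < t := ht; exact sub_ne_zero.2 this.ne')))
    · exact Set.ordConnected_Ioi.uIcc_subset h1 (lt_of_lt_of_le h1 h2)
  have hint2 := phi_intble hH hK hA hB h1 (lt_of_lt_of_le h1 h2)
  have hmono := intervalIntegral.integral_mono_on h2 hint1 hint2 hle
  have hcomp : (∫ t in y..B, M⁻¹ * (t - H₀)⁻¹)
      = M⁻¹ * (Real.log (B - H₀) - Real.log (y - H₀)) := by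
    rw [intervalIntegral.integral_const_mul]
    have : (∫ t in y..B, (t - H₀)⁻¹) = ∫ t in (y - H₀)..(B - H₀), t⁻¹ :=
      intervalIntegral.integral_comp_sub_right (fun t => t⁻¹) H₀
    rw [this, integral_inv_of_pos (by linarith) (by linarith),
      Real.log_div (by linarith) (by linarith)]
  rw [hcomp] at hmono
  exact hmono

lemma Fv_le_high (hH : 0 < H₀) (hK : 0 < K) (hA : 0 < A) (hB : H₀ < B) {t : ℝ}
    (h1 : B ≤ t) :
    Fv H₀ K A B t ≤ Real.sqrt (K * (B + A) / B) * t := by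
  have hBpos : 0 < B := lt_trans hH hB
  have htpos : 0 < t := lt_of_lt_of_le hBpos h1
  have hM : (0:ℝ) ≤ K * (B + A) / B :=
    le_of_lt (div_pos (mul_pos hK (by linarith)) hBpos)
  have key : K * (t - H₀) ^ 2 * (t + A) / (t + B)
      ≤ (Real.sqrt (K * (B + A) / B) * t) ^ 2 := by
    rw [mul_pow, Real.sq_sqrt hM]
    rw [div_le_iff₀ (by linarith)]
    have h2 : (t - H₀) ^ 2 ≤ t ^ 2 := by nlinarith
    have h3 : B * (t + A) ≤ (B + A) * (t + B) := by nlinarith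
    have h6 : K * (t - H₀) ^ 2 * (B * (t + A)) ≤ K * t ^ 2 * ((B + A) * (t + B)) := by
      apply mul_le_mul (by nlinarith) h3 (by nlinarith) (by positivity)
    have hfield : K * (B + A) / B * t ^ 2 * (t + B) = K * t ^ 2 * ((B + A) * (t + B)) / B := by
      field_simp
    rw [hfield, le_div_iff₀ hBpos]
    nlinarith
  calc Fv H₀ K A B t ≤ Real.sqrt ((Real.sqrt (K * (B + A) / B) * t) ^ 2) :=
        Real.sqrt_le_sqrt key
    _ = Real.sqrt (K * (B + A) / B) * t :=
        Real.sqrt_sq (mul_nonneg (Real.sqrt_nonneg _) htpos.le)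

lemma X_high (hH : 0 < H₀) (hK : 0 < K) (hA : 0 < A) (hB : H₀ < B) {y : ℝ}
    (h1 : B ≤ y) :
    Xi H₀ K A B y ≤ -((Real.sqrt (K * (B + A) / B))⁻¹ * Real.log (y / B)) := by
  have hBpos : 0 < B := lt_trans hH hB
  set M := Real.sqrt (K * (B + A) / B) with hMdef
  have hMpos : 0 < M := Real.sqrt_pos.2 (div_pos (mul_pos hK (by linarith)) hBpos)
  have hle : ∀ t ∈ Icc B y, M⁻¹ * t⁻¹ ≤ phi H₀ K A B t := by
    intro t ht
    have h1t : H₀ < t := lt_of_lt_of_le hB ht.1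
    have hFpos := Fv_pos hH hK hA hB h1t
    have hFle := Fv_le_high hH hK hA hB ht.1
    have := inv_anti₀ hFpos hFle
    calc M⁻¹ * t⁻¹ = (M * t)⁻¹ := (mul_inv _ _).symm
      _ ≤ (Fv H₀ K A B t)⁻¹ := this
  have hint1 : IntervalIntegrable (fun t => M⁻¹ * t⁻¹) MeasureTheory.volume B y := by
    apply ContinuousOn.intervalIntegrable
    apply ContinuousOn.mono (s := Ioi (0:ℝ))
    · exact continuousOn_const.mul (continuousOn_id.inv₀ (fun t ht => (ne_of_gt ht)))
    · exact Set.ordConnected_Ioi.uIcc_subset hBpos (lt_of_lt_of_le hBpos h1)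
  have hint2 := phi_intble hH hK hA hB hB (lt_of_lt_of_le hB h1)
  have hmono := intervalIntegral.integral_mono_on h1 hint1 hint2 hle
  have hcomp : (∫ t in B..y, M⁻¹ * t⁻¹) = M⁻¹ * Real.log (y / B) := by
    rw [intervalIntegral.integral_const_mul, integral_inv_of_pos hBpos (by linarith)]
  rw [hcomp] at hmono
  have hsymm : Xi H₀ K A B y = -∫ t in B..y, phi H₀ K A B t := by
    rw [Xi]
    exact intervalIntegral.integral_symm _ _
  rw [hsymm]
  linarith

lemma X_surj (hH : 0 < H₀) (hK : 0 < K) (hA : 0 < A) (hB : H₀ < B) (z : ℝ) :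
    ∃ y ∈ Ioi H₀, Xi H₀ K A B y = z := by
  have hBpos : 0 < B := lt_trans hH hB
  set c₀ := (Real.sqrt (K * (B + A) / (H₀ + B)))⁻¹ with hc₀
  set c₁ := (Real.sqrt (K * (B + A) / B))⁻¹ with hc₁
  have hc₀pos : 0 < c₀ :=
    inv_pos.2 (Real.sqrt_pos.2 (div_pos (mul_pos hK (by linarith)) (by linarith)))
  have hc₁pos : 0 < c₁ :=
    inv_pos.2 (Real.sqrt_pos.2 (div_pos (mul_pos hK (by linarith)) hBpos))
  set y₁ := H₀ + (B - H₀) * Real.exp (-(max z 0) / c₀) with hy₁def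
  set y₂ := B * Real.exp (max (-z) 0 / c₁) with hy₂def
  have hy₁gt : H₀ < y₁ := by
    have h0 : 0 < (B - H₀) * Real.exp (-(max z 0) / c₀) :=
      mul_pos (by linarith) (Real.exp_pos _)
    rw [hy₁def]; linarith
  have hy₁le : y₁ ≤ B := by
    have h1 : Real.exp (-(max z 0) / c₀) ≤ 1 := by
      apply Real.exp_le_one_iff.2
      apply div_nonpos_of_nonpos_of_nonneg (by simp [le_max_right]) hc₀pos.le
    rw [hy₁def]
    nlinarith [sub_pos.2 hB, Real.exp_pos (-(max z 0) / c₀)]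
  have hy₂ge : B ≤ y₂ := by
    have h1 : 1 ≤ Real.exp (max (-z) 0 / c₁) :=
      Real.one_le_exp (div_nonneg (le_max_right _ _) hc₁pos.le)
    rw [hy₂def]; nlinarith
  have hXy₁ : z ≤ Xi H₀ K A B y₁ := by
    have hlow := X_low hH hK hA hB hy₁gt hy₁le
    have hlog : Real.log (y₁ - H₀) = Real.log (B - H₀) + (-(max z 0) / c₀) := by
      have he : y₁ - H₀ = (B - H₀) * Real.exp (-(max z 0) / c₀) := by rw [hy₁def]; ring
      rw [he, Real.log_mul (ne_of_gt (by linarith)) (Real.exp_ne_zero _), Real.log_exp]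
    rw [hlog] at hlow
    have heq : c₀ * (Real.log (B - H₀) - (Real.log (B - H₀) + -(max z 0) / c₀))
        = max z 0 := by field_simp; ring
    rw [heq] at hlow
    exact le_trans (le_max_left z 0) hlow
  have hXy₂ : Xi H₀ K A B y₂ ≤ z := by
    have hhigh := X_high hH hK hA hB hy₂ge
    have hlog : Real.log (y₂ / B) = max (-z) 0 / c₁ := by
      have hq : y₂ / B = Real.exp (max (-z) 0 / c₁) := by
        rw [hy₂def]; field_simp
      rw [hq, Real.log_exp]
    rw [hlog] at hhigh
    have heq : c₁ * (max (-z) 0 / c₁) = max (-z) 0 := by field_simp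
    rw [heq] at hhigh
    have h2 : -max (-z) 0 ≤ z := by
      rcases max_cases (-z) 0 with ⟨h, _⟩ | ⟨h, _⟩ <;> simp [h] <;> linarith
    linarith
  have hy₁₂ : y₁ ≤ y₂ := le_trans hy₁le hy₂ge
  have hsub : Icc y₁ y₂ ⊆ Ioi H₀ := fun t ht => lt_of_lt_of_le hy₁gt ht.1
  have hcont : ContinuousOn (Xi H₀ K A B) (Icc y₁ y₂) := fun t ht =>
    (X_hasDerivAt hH hK hA hB (hsub ht)).continuousAt.continuousWithinAt
  have hiv := intermediate_value_Icc' hy₁₂ hcont (Set.mem_Icc.2 ⟨hXy₂, hXy₁⟩)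
  obtain ⟨y, hymem, hXy⟩ := hiv
  exact ⟨y, hsub hymem, hXy⟩

theorem main_exist (hH : 0 < H₀) (hK : 0 < K) (hA : 0 < A) (hB : H₀ < B) :
    ∃ h : ℝ → ℝ, Continuous h ∧ h 0 = B ∧ (∀ x, H₀ < h x) ∧
      (∀ x, HasDerivAt h
        (-Real.sqrt (K * (h x - H₀) ^ 2 * (h x + A) / (h x + B))) x) ∧
      (∀ x, 0 ≤ x → h x ≤ B) ∧ StrictAnti h ∧ Tendsto h atTop (nhds H₀) := by
  have hBmem : B ∈ Ioi H₀ := hB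
  set Y : Ioi H₀ → ℝ := fun y => -Xi H₀ K A B y with hYdef
  have hmono : StrictMono Y := by
    intro a b hab
    exact neg_lt_neg (X_anti hH hK hA hB a.2 b.2 (Subtype.coe_lt_coe.2 hab))
  have hsurj : Function.Surjective Y := by
    intro z
    obtain ⟨y, hy, hXy⟩ := X_surj hH hK hA hB (-z)
    exact ⟨⟨y, hy⟩, by simp [hYdef, hXy]⟩
  set e := StrictMono.orderIsoOfSurjective Y hmono hsurj with hedef
  set h : ℝ → ℝ := fun x => ((e.symm (-x) : Ioi H₀) : ℝ) with hhdef
  have hmem : ∀ x, H₀ < h x := fun x => (e.symm (-x)).2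
  have hXh : ∀ x, Xi H₀ K A B (h x) = x := by
    intro x
    have := StrictMono.orderIsoOfSurjective_self_symm_apply Y hmono hsurj (-x)
    have hYx : Y (e.symm (-x)) = -x := this
    rw [hYdef] at hYx
    simpa [hhdef] using (neg_injective hYx)
  have hcont : Continuous h :=
    continuous_subtype_val.comp (e.symm.continuous.comp continuous_neg)
  have h0 : h 0 = B := by
    have h1 : Xi H₀ K A B (h 0) = Xi H₀ K A B B := by rw [hXh 0, X_B]
    exact (X_anti hH hK hA hB).injOn (Set.mem_Ioi.2 (hmem 0)) hBmem h1
  have hD : ∀ x, HasDerivAt h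
      (-Real.sqrt (K * (h x - H₀) ^ 2 * (h x + A) / (h x + B))) x := by
    intro x
    have hx := X_hasDerivAt hH hK hA hB (hmem x)
    have hne : -(phi H₀ K A B (h x)) ≠ 0 :=
      neg_ne_zero.2 (inv_ne_zero (Fv_pos hH hK hA hB (hmem x)).ne')
    have := HasDerivAt.of_local_left_inverse hcont.continuousAt hx hne
      (Filter.Eventually.of_forall hXh)
    have heq : (-(phi H₀ K A B (h x)))⁻¹ = -(Fv H₀ K A B (h x)) := by
      rw [phi, inv_neg, inv_inv]
    rw [heq] at this
    exact this
  have hle : ∀ x, 0 ≤ x → h x ≤ B := by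
    intro x hx
    by_contra hcontra
    push_neg at hcontra
    have := X_anti hH hK hA hB hBmem (Set.mem_Ioi.2 (hmem x)) hcontra
    rw [hXh, X_B] at this
    linarith
  have hanti : StrictAnti h := by
    intro a b hab
    have : e.symm (-b) < e.symm (-a) := e.symm.strictMono (neg_lt_neg hab)
    exact this
  have htend : Tendsto h atTop (nhds H₀) := by
    rw [tendsto_order]
    constructor
    · intro a ha
      exact Filter.Eventually.of_forall fun x => lt_trans ha (hmem x)
    · intro a ha
      have hy₀ : (H₀ + a) / 2 ∈ Ioi H₀ := by simp [Set.mem_Ioi]; linarith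
      have hy₀a : (H₀ + a) / 2 < a := by linarith
      filter_upwards [eventually_gt_atTop (Xi H₀ K A B ((H₀ + a) / 2))] with x hx
      by_contra hcontra
      push_neg at hcontra
      have hlt : (H₀ + a) / 2 < h x := lt_of_lt_of_le hy₀a hcontra
      have := X_anti hH hK hA hB hy₀ (Set.mem_Ioi.2 (hmem x)) hlt
      rw [hXh] at this
      linarith
  exact ⟨h, hcont, h0, hmem, hD, hle, hanti, htend⟩

lemma lip (hH : 0 < H₀) (hK : 0 < K) (hA : 0 < A) (hB : H₀ < B) :
    ∃ L : NNReal, LipschitzOnWith L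
      (fun y => -Real.sqrt (K * (y - H₀) ^ 2 * (y + A) / (y + B)))
      (Icc (H₀ / 2) B) := by
  have hBpos : 0 < B := lt_trans hH hB
  have hd : (0:ℝ) < H₀ / 2 + B := by linarith
  set s : Set ℝ := Icc (H₀ / 2) B with hsdef
  set u : ℝ → ℝ := fun y => K * (y + A) / (y + B) with hudef
  set G : ℝ → ℝ := fun y => Real.sqrt (u y) with hGdef
  have hyB : ∀ y ∈ s, 0 < y + B := fun y hy => by
    have := hy.1; simp only [hsdef] at *; linarith
  have hupos : ∀ y ∈ s, 0 < u y := fun y hy =>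
    div_pos (mul_pos hK (by have := hy.1; linarith)) (hyB y hy)
  set m₀ : ℝ := K * (H₀ / 2 + A) / (2 * B) with hm₀def
  have hm₀pos : 0 < m₀ := div_pos (mul_pos hK (by linarith)) (by linarith)
  have hulow : ∀ y ∈ s, m₀ ≤ u y := by
    intro y hy
    exact div_le_div₀ (mul_nonneg hK.le (by have := hy.1; linarith))
      (by have := hy.1; nlinarith) (hyB y hy) (by have := hy.2; linarith)
  set MG : ℝ := Real.sqrt (K * (B + A) / (H₀ / 2 + B)) with hMGdef
  have huhigh : ∀ y ∈ s, u y ≤ K * (B + A) / (H₀ / 2 + B) := by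
    intro y hy
    exact div_le_div₀ (mul_nonneg hK.le (by linarith))
      (by have := hy.2; nlinarith) hd (by have := hy.1; linarith)
  have hGlow : ∀ y ∈ s, Real.sqrt m₀ ≤ G y := fun y hy =>
    Real.sqrt_le_sqrt (hulow y hy)
  have hGhigh : ∀ y ∈ s, G y ≤ MG := fun y hy => Real.sqrt_le_sqrt (huhigh y hy)
  have hGnonneg : ∀ y, 0 ≤ G y := fun y => Real.sqrt_nonneg _
  have hG' : ∀ y ∈ s, HasDerivWithinAt G (K * (B - A) / (y + B) ^ 2 / (2 * G y)) s y := by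
    intro y hy
    have h1 : HasDerivAt (fun t : ℝ => K * (t + A)) K y := by
      simpa using ((hasDerivAt_id y).add_const A).const_mul K
    have h2 : HasDerivAt (fun t : ℝ => t + B) 1 y := (hasDerivAt_id y).add_const B
    have h3 := h1.div h2 (ne_of_gt (hyB y hy))
    have h4 : HasDerivAt u (K * (B - A) / (y + B) ^ 2) y := by
      refine h3.congr_deriv ?_
      ring
    exact (h4.hasDerivWithinAt).sqrt (hupos y hy).ne'
  set C : ℝ := K * |B - A| / (H₀ / 2 + B) ^ 2 / (2 * Real.sqrt m₀) with hCdef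
  have hCnonneg : 0 ≤ C := by positivity
  have hbound : ∀ y ∈ s, ‖K * (B - A) / (y + B) ^ 2 / (2 * G y)‖ ≤ C := by
    intro y hy
    rw [Real.norm_eq_abs, abs_div]
    have h1 : |K * (B - A) / (y + B) ^ 2| ≤ K * |B - A| / (H₀ / 2 + B) ^ 2 := by
      rw [abs_div, abs_mul, abs_of_pos hK, abs_of_pos (pow_pos (hyB y hy) 2)]
      exact div_le_div₀ (by positivity) le_rfl (by positivity)
        (pow_le_pow_left₀ hd.le (by have := hy.1; linarith) 2)
    have h2 : 2 * Real.sqrt m₀ ≤ |2 * G y| := by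
      rw [abs_of_nonneg (by have := hGnonneg y; linarith)]
      linarith [hGlow y hy]
    exact div_le_div₀ (by positivity) h1 (by positivity) h2
  have hGlip : ∀ y ∈ s, ∀ z ∈ s, |G y - G z| ≤ C * |y - z| := by
    intro y hy z hz
    have := Convex.norm_image_sub_le_of_norm_hasDerivWithin_le
      (fun t ht => hG' t ht) hbound (convex_Icc _ _) hz hy
    simpa [Real.norm_eq_abs] using this
  have veq : ∀ y ∈ s, Real.sqrt (K * (y - H₀) ^ 2 * (y + A) / (y + B))
      = |y - H₀| * G y := by
    intro y hy
    have harg : K * (y - H₀) ^ 2 * (y + A) / (y + B) = (y - H₀) ^ 2 * u y := by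
      rw [hudef]; ring
    rw [harg, Real.sqrt_mul (sq_nonneg _), Real.sqrt_sq_eq_abs]
  refine ⟨Real.toNNReal (B * C + MG), ?_⟩
  apply LipschitzOnWith.of_dist_le_mul
  intro y hy z hz
  rw [Real.dist_eq, Real.dist_eq]
  have hrw : -Real.sqrt (K * (y - H₀) ^ 2 * (y + A) / (y + B))
      - -Real.sqrt (K * (z - H₀) ^ 2 * (z + A) / (z + B))
      = -(|y - H₀| * G y - |z - H₀| * G z) := by
    rw [veq y hy, veq z hz]; ring
  rw [hrw, abs_neg]
  have hkey : |y - H₀| * G y - |z - H₀| * G z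
      = |y - H₀| * (G y - G z) + G z * (|y - H₀| - |z - H₀|) := by ring
  have habs1 : |y - H₀| ≤ B := by
    have h1 := hy.1; have h2 := hy.2
    rw [abs_le]; constructor <;> simp only [hsdef, mem_Icc] at * <;> linarith
  have habs2 : abs (|y - H₀| - |z - H₀|) ≤ |y - z| := by
    have h := abs_abs_sub_abs_le_abs_sub (y - H₀) (z - H₀)
    rwa [sub_sub_sub_cancel_right] at h
  have hstep : abs (|y - H₀| * G y - |z - H₀| * G z)
      ≤ B * (C * |y - z|) + MG * |y - z| := by
    rw [hkey]
    calc abs (|y - H₀| * (G y - G z) + G z * (|y - H₀| - |z - H₀|))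
        ≤ abs (|y - H₀| * (G y - G z)) + abs (G z * (|y - H₀| - |z - H₀|)) := abs_add_le _ _
      _ = |y - H₀| * |G y - G z| + G z * abs (|y - H₀| - |z - H₀|) := by
          rw [abs_mul, abs_mul, abs_abs, abs_of_nonneg (hGnonneg z)]
      _ ≤ B * (C * |y - z|) + MG * |y - z| := by
          apply add_le_add
          · exact mul_le_mul habs1 (hGlip y hy z hz) (abs_nonneg _)
              (by linarith [hH])
          · exact mul_le_mul (hGhigh z hz) habs2 (abs_nonneg _)
              (le_trans (hGnonneg z) (hGhigh z hz))
  have hfin : B * (C * |y - z|) + MG * |y - z| = (B * C + MG) * |y - z| := by ring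
  calc abs (|y - H₀| * G y - |z - H₀| * G z) ≤ (B * C + MG) * |y - z| := by
        rw [← hfin]; exact hstep
    _ ≤ (Real.toNNReal (B * C + MG) : ℝ) * |y - z| := by
        apply mul_le_mul_of_nonneg_right _ (abs_nonneg _)
        rw [Real.coe_toNNReal']
        exact le_max_left _ _

lemma sol_antitone (hH : 0 < H₀) {f : ℝ → ℝ} (hfc : ContinuousOn f (Ici 0))
    (hf' : ∀ x ∈ Ici (0:ℝ), HasDerivWithinAt f
      (-Real.sqrt (K * (f x - H₀) ^ 2 * (f x + A) / (f x + B))) (Ici 0) x) :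
    AntitoneOn f (Ici 0) := by
  apply antitoneOn_of_deriv_nonpos (convex_Ici 0) hfc
  · intro x hx
    rw [interior_Ici] at hx
    exact ((hf' x (Set.mem_Ici.2 (le_of_lt hx))).hasDerivAt
      (Ici_mem_nhds hx)).differentiableAt.differentiableWithinAt
  · intro x hx
    rw [interior_Ici] at hx
    rw [((hf' x (Set.mem_Ici.2 (le_of_lt hx))).hasDerivAt (Ici_mem_nhds hx)).deriv]
    exact neg_nonpos.2 (Real.sqrt_nonneg _)

lemma sol_ge (hH : 0 < H₀) (hK : 0 < K) (hA : 0 < A) (hB : H₀ < B)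
    {f : ℝ → ℝ} (hfc : ContinuousOn f (Ici 0))
    (hf' : ∀ x ∈ Ici (0:ℝ), HasDerivWithinAt f
      (-Real.sqrt (K * (f x - H₀) ^ 2 * (f x + A) / (f x + B))) (Ici 0) x)
    (hf0 : f 0 = B) : ∀ x ∈ Ici (0:ℝ), H₀ ≤ f x := by
  by_contra hcon
  push_neg at hcon
  obtain ⟨x₁, hx₁0, hx₁⟩ := hcon
  have hant := sol_antitone hH hfc hf'
  set w := max (f x₁) (3 * H₀ / 4) with hwdef
  have hwltH : w < H₀ := max_lt hx₁ (by linarith)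
  have hwge : 3 * H₀ / 4 ≤ w := le_max_right _ _
  have hx₁0' : (0:ℝ) ∈ Ici (0:ℝ) := Set.mem_Ici.2 (le_refl 0)
  have hIcc : Icc (0:ℝ) x₁ ⊆ Ici 0 := fun t ht => ht.1
  have hivt := intermediate_value_Icc' hx₁0 (hfc.mono hIcc)
    (show w ∈ Icc (f x₁) (f 0) from ⟨le_max_left _ _, by rw [hf0]; linarith⟩)
  obtain ⟨x₁', hx₁'mem, hfx₁'⟩ := hivt
  have hIcc' : Icc (0:ℝ) x₁' ⊆ Ici 0 := fun t ht => ht.1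
  set Z := Icc (0:ℝ) x₁' ∩ f ⁻¹' {H₀} with hZdef
  have hZclosed : IsClosed Z :=
    (hfc.mono hIcc').preimage_isClosed_of_isClosed isClosed_Icc isClosed_singleton
  have hZne : Z.Nonempty := by
    have hivt2 := intermediate_value_Icc' hx₁'mem.1 (hfc.mono hIcc')
      (show H₀ ∈ Icc (f x₁') (f 0) from ⟨by rw [hfx₁']; exact hwltH.le, by rw [hf0]; linarith⟩)
    obtain ⟨x₀', hmem, hfx₀'⟩ := hivt2
    exact ⟨x₀', hmem, by simp [hfx₀']⟩
  have hZcpt : IsCompact Z :=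
    isCompact_Icc.of_isClosed_subset hZclosed inter_subset_left
  set x₀ := sSup Z with hx₀def
  have hx₀Z : x₀ ∈ Z := hZcpt.sSup_mem hZne
  have hfx₀ : f x₀ = H₀ := hx₀Z.2
  have hx₀0 : 0 ≤ x₀ := hx₀Z.1.1
  have hx₀le : x₀ ≤ x₁' := hx₀Z.1.2
  have hx₀lt : x₀ < x₁' := lt_of_le_of_ne hx₀le
    (fun h => by rw [h, hfx₁'] at hfx₀; linarith)
  obtain ⟨L, hL⟩ := lip hH hK hA hB
  have hIccx : Icc x₀ x₁' ⊆ Ici 0 := fun t ht => le_trans hx₀0 ht.1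
  have hEq := ODE_solution_unique_of_mem_Icc_right
    (v := fun _ y => -Real.sqrt (K * (y - H₀) ^ 2 * (y + A) / (y + B)))
    (s := fun _ => Icc (H₀ / 2) B) (K := L) (fun _ _ => hL)
    (f := f) (g := fun _ => H₀) (a := x₀) (b := x₁')
    (hfc.mono hIccx)
    (fun t ht => (hf' t (hIccx ⟨ht.1, ht.2.le⟩)).mono (Ici_subset_Ici.2 (le_trans hx₀0 ht.1)))
    (fun t ht => by
      have htmem : t ∈ Ici (0:ℝ) := le_trans hx₀0 ht.1
      have h1 : f t ≤ f x₀ := hant (Set.mem_Ici.2 hx₀0) htmem ht.1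
      have h2 : f x₁' ≤ f t := hant htmem (Set.mem_Ici.2 hx₁'mem.1) ht.2.le
      rw [hfx₀] at h1
      rw [hfx₁'] at h2
      exact ⟨by linarith, by linarith⟩)
    continuousOn_const
    (fun t ht => by
      have hc : HasDerivWithinAt (fun _ : ℝ => H₀) 0 (Ici t) t := hasDerivWithinAt_const t _ H₀
      refine hc.congr_deriv ?_
      simp)
    (fun t ht => ⟨by linarith, by linarith⟩)
    hfx₀
  have := hEq ⟨hx₀le, le_refl x₁'⟩
  rw [hfx₁'] at this
  simp at this
  linarith

lemma uniq_general (hH : 0 < H₀) (hK : 0 < K) (hA : 0 < A) (hB : H₀ < B)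
    {f g : ℝ → ℝ} (hfc : ContinuousOn f (Ici 0))
    (hf' : ∀ x ∈ Ici (0:ℝ), HasDerivWithinAt f
      (-Real.sqrt (K * (f x - H₀) ^ 2 * (f x + A) / (f x + B))) (Ici 0) x)
    (hf0 : f 0 = B)
    (hgc : ContinuousOn g (Ici 0))
    (hg' : ∀ x ∈ Ici (0:ℝ), HasDerivWithinAt g
      (-Real.sqrt (K * (g x - H₀) ^ 2 * (g x + A) / (g x + B))) (Ici 0) x)
    (hg0 : g 0 = B) : EqOn f g (Ici 0) := by
  intro x hx
  have hx0 : (0:ℝ) ≤ x := hx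
  obtain ⟨L, hL⟩ := lip hH hK hA hB
  have hgef := sol_ge hH hK hA hB hfc hf' hf0
  have hgeg := sol_ge hH hK hA hB hgc hg' hg0
  have hantf := sol_antitone hH hfc hf'
  have hantg := sol_antitone hH hgc hg'
  have hIccx : Icc (0:ℝ) x ⊆ Ici 0 := fun t ht => ht.1
  have hEq := ODE_solution_unique_of_mem_Icc_right
    (v := fun _ y => -Real.sqrt (K * (y - H₀) ^ 2 * (y + A) / (y + B)))
    (s := fun _ => Icc (H₀ / 2) B) (K := L) (fun _ _ => hL)
    (f := f) (g := g) (a := 0) (b := x)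
    (hfc.mono hIccx)
    (fun t ht => (hf' t ht.1).mono (Ici_subset_Ici.2 ht.1))
    (fun t ht => by
      have h1 : H₀ ≤ f t := hgef t ht.1
      have h2 : f t ≤ f 0 := hantf (Set.mem_Ici.2 (le_refl 0)) ht.1 ht.1
      rw [hf0] at h2
      exact ⟨by linarith, h2⟩)
    (hgc.mono hIccx)
    (fun t ht => (hg' t ht.1).mono (Ici_subset_Ici.2 ht.1))
    (fun t ht => by
      have h1 : H₀ ≤ g t := hgeg t ht.1
      have h2 : g t ≤ g 0 := hantg (Set.mem_Ici.2 (le_refl 0)) ht.1 ht.1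
      rw [hg0] at h2
      exact ⟨by linarith, h2⟩)
    (hf0.trans hg0.symm)
  exact hEq ⟨hx0, le_refl x⟩

end PW17

open PW17 in
/-- Existence (and uniqueness on `[0, ∞)`) of the right half of
the peaked solitary wave of critical maximal amplitude `hcrit` and speed `c̄`. -/
theorem peaked_wave_existence_uniqueness
    (g H₀ Einf vs hcrit c : ℝ) (hg : 0 < g) (hH : 0 < H₀) (hE : 0 < Einf)
    (hv : 0 < vs) (hcrit_gt : H₀ < hcrit) (hc : 0 < c)
    (hc2 : c ^ 2 = g * hcrit + hcrit * (hcrit + 2 * H₀) * Einf / H₀ ^ 3)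
    (hrel : c * H₀ ^ 2 = vs * hcrit ^ 2) :
    ∃ h : ℝ → ℝ,
      (ContDiffOn ℝ 1 h (Set.Ici 0) ∧ h 0 = hcrit ∧
        (∀ x ∈ Set.Ici (0 : ℝ), HasDerivWithinAt h
          (-Real.sqrt ((3 * Einf / (c * H₀ ^ 3 * vs)) * (h x - H₀) ^ 2
            * (h x + (vs ^ 2 / Einf) * (hcrit ^ 3 / H₀)) / (h x + hcrit)))
          (Set.Ici 0) x)) ∧
      (∀ x ∈ Set.Ici (0 : ℝ), H₀ < h x ∧ h x ≤ hcrit) ∧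
      StrictAntiOn h (Set.Ici 0) ∧
      Tendsto h atTop (nhds H₀) ∧
      (∀ h₂ : ℝ → ℝ,
        (ContDiffOn ℝ 1 h₂ (Set.Ici 0) ∧ h₂ 0 = hcrit ∧
          (∀ x ∈ Set.Ici (0 : ℝ), HasDerivWithinAt h₂
            (-Real.sqrt ((3 * Einf / (c * H₀ ^ 3 * vs)) * (h₂ x - H₀) ^ 2
              * (h₂ x + (vs ^ 2 / Einf) * (hcrit ^ 3 / H₀)) / (h₂ x + hcrit)))
            (Set.Ici 0) x)) →
        Set.EqOn h h₂ (Set.Ici 0)) := by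
  have hK : 0 < 3 * Einf / (c * H₀ ^ 3 * vs) := by positivity
  have hcp : 0 < hcrit := lt_trans hH hcrit_gt
  have hA : 0 < (vs ^ 2 / Einf) * (hcrit ^ 3 / H₀) :=
    mul_pos (div_pos (pow_pos hv 2) hE) (div_pos (pow_pos hcp 3) hH)
  obtain ⟨h, hcont, h0, hmem, hD, hle, hanti, htend⟩ :=
    main_exist (H₀ := H₀) (K := 3 * Einf / (c * H₀ ^ 3 * vs))
      (A := (vs ^ 2 / Einf) * (hcrit ^ 3 / H₀)) (B := hcrit) hH hK hA hcrit_gt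
  have hCD : ContDiff ℝ 1 h := by
    rw [contDiff_one_iff_deriv]
    refine ⟨fun x => (hD x).differentiableAt, ?_⟩
    have hde : deriv h = fun x =>
        -Real.sqrt ((3 * Einf / (c * H₀ ^ 3 * vs)) * (h x - H₀) ^ 2
          * (h x + (vs ^ 2 / Einf) * (hcrit ^ 3 / H₀)) / (h x + hcrit)) :=
      funext fun x => (hD x).deriv
    rw [hde]
    exact ((Fv_contOn hH hcrit_gt).comp_continuous hcont hmem).neg
  refine ⟨h, ⟨hCD.contDiffOn, h0, fun x _ => (hD x).hasDerivWithinAt⟩,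
    fun x hx => ⟨hmem x, hle x hx⟩, hanti.strictAntiOn _, htend, ?_⟩
  rintro h₂ ⟨h₂cd, h₂0, h₂ode⟩
  exact uniq_general hH hK hA hcrit_gt hCD.continuous.continuousOn
    (fun x _ => (hD x).hasDerivWithinAt) h0 h₂cd.continuousOn h₂ode h₂0
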